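/- Let ρ : (0,∞) → ℝ be C² and define u_k(x) = ρ(|x|) x_k/|x| for k = 1,…,N. Then for all x ≠ 0: ∑_{k=1}^N |D²u_k(x)|² = ρ''(|x|)² + 3(N−1)(ρ(|x|) − |x| ρ'(|x|))²/|x|⁴. -/

import Mathlib

open Real Filter Topology

section aux

variable {N : ℕ} (rho rho' rho'' : ℝ → ℝ)
  (hd : ∀ r > (0:ℝ), HasDerivAt rho (rho' r) r)
  (hd2 : ∀ r > (0:ℝ), HasDerivAt rho' (rho'' r) r)

lemma hasFDerivAt_norm' (x : EuclideanSpace ℝ (Fin N)) (hx : x ≠ 0) :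
    HasFDerivAt (fun y : EuclideanSpace ℝ (Fin N) => ‖y‖) (‖x‖⁻¹ • innerSL ℝ x) x := by
  have hxn : ‖x‖ ≠ 0 := norm_ne_zero_iff.mpr hx
  have h1 : HasFDerivAt (fun y : EuclideanSpace ℝ (Fin N) => ‖y‖ ^ 2) (2 • innerSL ℝ x) x :=
    (hasStrictFDerivAt_norm_sq x).hasFDerivAt
  have h2 : HasDerivAt Real.sqrt (1 / (2 * ‖x‖)) (‖x‖ ^ 2) := by
    have := Real.hasDerivAt_sqrt (x := ‖x‖ ^ 2) (by positivity)
    simpa [Real.sqrt_sq (norm_nonneg x)] using this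
  have h3 := h2.comp_hasFDerivAt x h1
  have heq : (fun y : EuclideanSpace ℝ (Fin N) => Real.sqrt (‖y‖ ^ 2)) = fun y => ‖y‖ := by
    funext y; exact Real.sqrt_sq (norm_nonneg y)
  rw [show Real.sqrt ∘ (fun y : EuclideanSpace ℝ (Fin N) => ‖y‖ ^ 2) = fun y => ‖y‖ from heq] at h3
  refine h3.congr_fderiv ?_
  ext v
  simp [smul_smul]
  field_simp

/-- composition of a scalar function with the norm -/
lemma radial_hasFDerivAt (c : ℝ → ℝ) (c' : ℝ) (x : EuclideanSpace ℝ (Fin N)) (hx : x ≠ 0)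
    (hc : HasDerivAt c c' ‖x‖) :
    HasFDerivAt (fun y : EuclideanSpace ℝ (Fin N) => c ‖y‖)
      (c' • (‖x‖⁻¹ • innerSL ℝ x)) x :=
  hc.comp_hasFDerivAt x (hasFDerivAt_norm' x hx)

include hd in
lemma hasFDeriv_V (x : EuclideanSpace ℝ (Fin N)) (hx : x ≠ 0) (k : Fin N) :
    ∃ L : EuclideanSpace ℝ (Fin N) →L[ℝ] ℝ,
      HasFDerivAt (fun y : EuclideanSpace ℝ (Fin N) => rho ‖y‖ * y k / ‖y‖) L x ∧
      ∀ j, L (EuclideanSpace.single j 1)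
        = (rho' ‖x‖ / ‖x‖ ^ 2 - rho ‖x‖ / ‖x‖ ^ 3) * (x j * x k)
          + (rho ‖x‖ / ‖x‖) * (if j = k then 1 else 0) := by
  have hxn : ‖x‖ ≠ 0 := norm_ne_zero_iff.mpr hx
  have hxp : (0:ℝ) < ‖x‖ := norm_pos_iff.mpr hx
  have h1 : HasFDerivAt (fun y : EuclideanSpace ℝ (Fin N) => rho ‖y‖)
      ((rho' ‖x‖) • (‖x‖⁻¹ • innerSL ℝ x)) x :=
    radial_hasFDerivAt rho _ x hx (hd _ hxp)
  have hk : HasFDerivAt (fun y : EuclideanSpace ℝ (Fin N) => y k)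
      (EuclideanSpace.proj k : EuclideanSpace ℝ (Fin N) →L[ℝ] ℝ) x := by
    exact (EuclideanSpace.proj k : EuclideanSpace ℝ (Fin N) →L[ℝ] ℝ).hasFDerivAt
  have hinv : HasFDerivAt (fun y : EuclideanSpace ℝ (Fin N) => ‖y‖⁻¹)
      ((-(‖x‖ ^ 2)⁻¹) • (‖x‖⁻¹ • innerSL ℝ x)) x :=
    radial_hasFDerivAt _ _ x hx (hasDerivAt_inv hxn)
  have h2 := (h1.mul hk).mul hinv
  refine ⟨_, h2.congr_of_eventuallyEq
      (Filter.Eventually.of_forall fun y => div_eq_mul_inv _ _), fun j => ?_⟩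
  have hinner : (innerSL ℝ x) (EuclideanSpace.single j (1:ℝ)) = x j := by
    simp [EuclideanSpace.inner_single_right]
  have hproj : (EuclideanSpace.proj k : EuclideanSpace ℝ (Fin N) →L[ℝ] ℝ)
      (EuclideanSpace.single j (1:ℝ)) = if j = k then 1 else 0 := by
    simp [EuclideanSpace.single_apply, eq_comm]
  simp only [ContinuousLinearMap.add_apply, ContinuousLinearMap.smul_apply, hinner, hproj,
    smul_eq_mul]
  by_cases h : j = k <;> simp [h] <;> field_simp <;> ring

set_option maxHeartbeats 1000000 in
include hd hd2 in
/-- Derivative of `G y = (ρ'(r)/r² − ρ(r)/r³)(y_j y_k) + (ρ(r)/r) δ_{jk}`, `r = ‖y‖`. -/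
lemma hasFDeriv_G (x : EuclideanSpace ℝ (Fin N)) (hx : x ≠ 0) (k j : Fin N) :
    ∃ L : EuclideanSpace ℝ (Fin N) →L[ℝ] ℝ,
      HasFDerivAt (fun y : EuclideanSpace ℝ (Fin N) =>
        (rho' ‖y‖ / ‖y‖ ^ 2 - rho ‖y‖ / ‖y‖ ^ 3) * (y j * y k)
          + (rho ‖y‖ / ‖y‖) * (if j = k then 1 else 0)) L x ∧
      ∀ i, L (EuclideanSpace.single i 1)
        = (rho'' ‖x‖ / ‖x‖ ^ 3 - 3 * rho' ‖x‖ / ‖x‖ ^ 4 + 3 * rho ‖x‖ / ‖x‖ ^ 5)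
            * (x i * x j * x k)
          + (rho' ‖x‖ / ‖x‖ ^ 2 - rho ‖x‖ / ‖x‖ ^ 3)
            * ((if i = j then x k else 0) + (if i = k then x j else 0)
               + (if j = k then x i else 0)) := by
  have hxn : ‖x‖ ≠ 0 := norm_ne_zero_iff.mpr hx
  have hxp : (0:ℝ) < ‖x‖ := norm_pos_iff.mpr hx
  have ha : HasDerivAt (fun r => rho' r / r ^ 2 - rho r / r ^ 3)
      (rho'' ‖x‖ / ‖x‖ ^ 2 - 3 * rho' ‖x‖ / ‖x‖ ^ 3 + 3 * rho ‖x‖ / ‖x‖ ^ 4) ‖x‖ := by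
    have h1 := ((hd2 _ hxp).div (hasDerivAt_pow 2 ‖x‖) (by positivity)).sub
      ((hd _ hxp).div (hasDerivAt_pow 3 ‖x‖) (by positivity))
    refine h1.congr_deriv ?_
    field_simp
    ring
  have hb : HasDerivAt (fun r => rho r / r)
      (rho' ‖x‖ / ‖x‖ - rho ‖x‖ / ‖x‖ ^ 2) ‖x‖ := by
    have h1 := (hd _ hxp).div (hasDerivAt_id ‖x‖) hxn
    refine h1.congr_deriv ?_
    simp only [id]
    field_simp
  have hfa : HasFDerivAt
      (fun y : EuclideanSpace ℝ (Fin N) => rho' ‖y‖ / ‖y‖ ^ 2 - rho ‖y‖ / ‖y‖ ^ 3)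
      ((rho'' ‖x‖ / ‖x‖ ^ 2 - 3 * rho' ‖x‖ / ‖x‖ ^ 3 + 3 * rho ‖x‖ / ‖x‖ ^ 4)
        • (‖x‖⁻¹ • innerSL ℝ x)) x :=
    radial_hasFDerivAt _ _ x hx ha
  have hfb : HasFDerivAt (fun y : EuclideanSpace ℝ (Fin N) => rho ‖y‖ / ‖y‖)
      ((rho' ‖x‖ / ‖x‖ - rho ‖x‖ / ‖x‖ ^ 2) • (‖x‖⁻¹ • innerSL ℝ x)) x :=
    radial_hasFDerivAt _ _ x hx hb
  have hj : HasFDerivAt (fun y : EuclideanSpace ℝ (Fin N) => y j)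
      (EuclideanSpace.proj j : EuclideanSpace ℝ (Fin N) →L[ℝ] ℝ) x := by
    exact (EuclideanSpace.proj j : EuclideanSpace ℝ (Fin N) →L[ℝ] ℝ).hasFDerivAt
  have hk : HasFDerivAt (fun y : EuclideanSpace ℝ (Fin N) => y k)
      (EuclideanSpace.proj k : EuclideanSpace ℝ (Fin N) →L[ℝ] ℝ) x := by
    exact (EuclideanSpace.proj k : EuclideanSpace ℝ (Fin N) →L[ℝ] ℝ).hasFDerivAt
  have h2 := (hfa.mul (hj.mul hk)).add (hfb.mul_const (if j = k then (1:ℝ) else 0))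
  refine ⟨_, h2, fun i => ?_⟩
  have hinner : (innerSL ℝ x) (EuclideanSpace.single i (1:ℝ)) = x i := by
    simp [EuclideanSpace.inner_single_right]
  have hpj : (EuclideanSpace.proj j : EuclideanSpace ℝ (Fin N) →L[ℝ] ℝ)
      (EuclideanSpace.single i (1:ℝ)) = if i = j then 1 else 0 := by
    simp [EuclideanSpace.single_apply, eq_comm]
  have hpk : (EuclideanSpace.proj k : EuclideanSpace ℝ (Fin N) →L[ℝ] ℝ)
      (EuclideanSpace.single i (1:ℝ)) = if i = k then 1 else 0 := by
    simp [EuclideanSpace.single_apply, eq_comm]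
  simp only [ContinuousLinearMap.add_apply, ContinuousLinearMap.smul_apply,
    ContinuousLinearMap.coe_smul', Pi.smul_apply, Pi.mul_apply, hinner, hpj, hpk, smul_eq_mul]
  clear h2 hfa hfb ha hb hj hk hinner hpj hpk hd hd2
  have hxi : ∃ t : ℝ, x i = t := ⟨_, rfl⟩
  have hxj : ∃ t : ℝ, x j = t := ⟨_, rfl⟩
  have hxk : ∃ t : ℝ, x k = t := ⟨_, rfl⟩
  obtain ⟨xi, hxi⟩ := hxi; obtain ⟨xj, hxj⟩ := hxj; obtain ⟨xk, hxk⟩ := hxk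
  rw [hxi, hxj, hxk]
  generalize ‖x‖ = r at hxn
  generalize rho r = P0
  generalize rho' r = P1
  generalize rho'' r = P2
  split_ifs <;> field_simp <;> ring

include hd hd2 in
lemma hess_entry (x : EuclideanSpace ℝ (Fin N)) (hx : x ≠ 0) (k i j : Fin N)
    (u : EuclideanSpace ℝ (Fin N) → ℝ)
    (hu : ∀ y : EuclideanSpace ℝ (Fin N), y ≠ 0 → u y = rho ‖y‖ * y k / ‖y‖) :
    fderiv ℝ (fun y => fderiv ℝ u y (EuclideanSpace.single j 1)) x (EuclideanSpace.single i 1)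
      = (rho'' ‖x‖ / ‖x‖ ^ 3 - 3 * rho' ‖x‖ / ‖x‖ ^ 4 + 3 * rho ‖x‖ / ‖x‖ ^ 5)
          * (x i * x j * x k)
        + (rho' ‖x‖ / ‖x‖ ^ 2 - rho ‖x‖ / ‖x‖ ^ 3)
          * ((if i = j then x k else 0) + (if i = k then x j else 0)
             + (if j = k then x i else 0)) := by
  have hev : (fun y => fderiv ℝ u y (EuclideanSpace.single j 1)) =ᶠ[𝓝 x]
      (fun y : EuclideanSpace ℝ (Fin N) =>
        (rho' ‖y‖ / ‖y‖ ^ 2 - rho ‖y‖ / ‖y‖ ^ 3) * (y j * y k)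
          + (rho ‖y‖ / ‖y‖) * (if j = k then 1 else 0)) := by
    filter_upwards [isOpen_ne.mem_nhds hx] with y hy
    have hyu : u =ᶠ[𝓝 y]
        (fun z : EuclideanSpace ℝ (Fin N) => rho ‖z‖ * z k / ‖z‖) := by
      filter_upwards [isOpen_ne.mem_nhds hy] with z hz
      exact hu z hz
    rw [hyu.fderiv_eq]
    obtain ⟨L, hL, hLj⟩ := hasFDeriv_V rho rho' hd y hy k
    rw [hL.fderiv]
    exact hLj j
  rw [hev.fderiv_eq]
  obtain ⟨L, hL, hLi⟩ := hasFDeriv_G rho rho' rho'' hd hd2 x hx k j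
  rw [hL.fderiv]
  exact hLi i

lemma key_sum (N : ℕ) (x : Fin N → ℝ) (A B : ℝ) :
    ∑ k, ∑ i, ∑ j, (A * (x i * x j * x k)
      + B * ((if i = j then x k else 0) + (if i = k then x j else 0)
             + (if j = k then x i else 0))) ^ 2
    = A ^ 2 * (∑ i, x i ^ 2) ^ 3 + 6 * A * B * (∑ i, x i ^ 2) ^ 2
      + (3 * N + 6) * B ^ 2 * (∑ i, x i ^ 2) := by
  have expand : ∀ i j k : Fin N,
      (A * (x i * x j * x k)
        + B * ((if i = j then x k else 0) + (if i = k then x j else 0)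
               + (if j = k then x i else 0))) ^ 2
      = A ^ 2 * (x i ^ 2 * (x j ^ 2 * x k ^ 2))
        + (2*A*B) * ((if i = j then (1:ℝ) else 0) * (x i * x j * x k ^ 2))
        + (2*A*B) * ((if i = k then (1:ℝ) else 0) * (x j ^ 2 * (x i * x k)))
        + (2*A*B) * ((if j = k then (1:ℝ) else 0) * (x i ^ 2 * (x j * x k)))
        + B ^ 2 * ((if i = j then (1:ℝ) else 0) * x k ^ 2)
        + B ^ 2 * ((if i = k then (1:ℝ) else 0) * x j ^ 2)
        + B ^ 2 * ((if j = k then (1:ℝ) else 0) * x i ^ 2)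
        + (2*B^2) * ((if i = j then (1:ℝ) else 0) * ((if i = k then (1:ℝ) else 0) * (x j * x k)))
        + (2*B^2) * ((if i = j then (1:ℝ) else 0) * ((if j = k then (1:ℝ) else 0) * (x k * x i)))
        + (2*B^2) * ((if i = k then (1:ℝ) else 0) * ((if j = k then (1:ℝ) else 0) * (x j * x i))) := by
    intro i j k
    split_ifs <;> ring
  have hite : ∀ (c : Prop) [Decidable c] (f : Fin N → ℝ),
      (∑ j, if c then f j else 0) = if c then ∑ j, f j else 0 := by
    intros c _ f; split_ifs <;> simp
  simp only [expand, Finset.sum_add_distrib, mul_ite, ite_mul, one_mul, zero_mul, mul_zero,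
    mul_one, Finset.mul_sum, Finset.sum_ite_eq, Finset.sum_ite_eq', Finset.mem_univ, if_true,
    hite, Finset.sum_const, Finset.card_univ, Fintype.card_fin, nsmul_eq_mul]
  ring_nf
  simp only [← Finset.sum_mul, ← Finset.mul_sum]
  ring_nf
  have hsq : ∀ (c : ℝ), ∑ i, c * x i * x i = c * ∑ i, x i ^ 2 := by
    intro c; rw [Finset.mul_sum]; exact Finset.sum_congr rfl fun i _ => by ring
  simp only [Finset.sum_add_distrib, ← Finset.sum_mul, ← Finset.mul_sum]
  ring

end aux

/-- The squared Frobenius norm of the Hessian of `u : ℝ^N → ℝ` at `x`,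
i.e. the sum of squares of the second partial derivatives. -/
noncomputable def hessFrobSq {N : ℕ} (u : EuclideanSpace ℝ (Fin N) → ℝ)
    (x : EuclideanSpace ℝ (Fin N)) : ℝ :=
  ∑ i, ∑ j,
    (fderiv ℝ (fun y => fderiv ℝ u y (EuclideanSpace.single j 1)) x
       (EuclideanSpace.single i 1)) ^ 2

/-- With `u_k(x) = ρ(|x|) x_k/|x|`, for `x ≠ 0`:
`∑_k |D²u_k(x)|² = ρ''(|x|)² + 3(N−1)(ρ(|x|) − |x|ρ'(|x|))²/|x|⁴`. -/
theorem stmt_8 (N : ℕ) (hN : 2 ≤ N) (rho rho' rho'' : ℝ → ℝ)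
    (hrho : ContDiff ℝ 2 rho)
    (hd : ∀ r > (0:ℝ), HasDerivAt rho (rho' r) r)
    (hd2 : ∀ r > (0:ℝ), HasDerivAt rho' (rho'' r) r)
    (u : Fin N → EuclideanSpace ℝ (Fin N) → ℝ)
    (hu : ∀ k, ∀ x ≠ 0, u k x = rho ‖x‖ * x k / ‖x‖) :
    ∀ x : EuclideanSpace ℝ (Fin N), x ≠ 0 →
      ∑ k, hessFrobSq (u k) x
        = rho'' ‖x‖ ^ 2
          + 3 * ((N : ℝ) - 1) * (rho ‖x‖ - ‖x‖ * rho' ‖x‖) ^ 2 / ‖x‖ ^ 4 := by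
  intro x hx
  have hxn : ‖x‖ ≠ 0 := norm_ne_zero_iff.mpr hx
  set A : ℝ := rho'' ‖x‖ / ‖x‖ ^ 3 - 3 * rho' ‖x‖ / ‖x‖ ^ 4 + 3 * rho ‖x‖ / ‖x‖ ^ 5 with hA
  set B : ℝ := rho' ‖x‖ / ‖x‖ ^ 2 - rho ‖x‖ / ‖x‖ ^ 3 with hB
  have entry : ∀ k i j : Fin N,
      fderiv ℝ (fun y => fderiv ℝ (u k) y (EuclideanSpace.single j 1)) x
        (EuclideanSpace.single i 1)
      = A * ((fun i => x i) i * (fun i => x i) j * (fun i => x i) k)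
        + B * ((if i = j then (fun i => x i) k else 0) + (if i = k then (fun i => x i) j else 0)
               + (if j = k then (fun i => x i) i else 0)) := fun k i j =>
    hess_entry rho rho' rho'' hd hd2 x hx k i j (u k) (hu k)
  have hS : ∑ i, (fun i => x i) i ^ 2 = ‖x‖ ^ 2 := by
    rw [EuclideanSpace.norm_eq, Real.sq_sqrt (by positivity)]
    exact Finset.sum_congr rfl fun i _ => by rw [Real.norm_eq_abs, sq_abs]
  calc ∑ k, hessFrobSq (u k) x
      = ∑ k, ∑ i, ∑ j, (A * ((fun i => x i) i * (fun i => x i) j * (fun i => x i) k)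
          + B * ((if i = j then (fun i => x i) k else 0)
                 + (if i = k then (fun i => x i) j else 0)
                 + (if j = k then (fun i => x i) i else 0))) ^ 2 := by
        simp only [hessFrobSq, entry]
    _ = A ^ 2 * (‖x‖ ^ 2) ^ 3 + 6 * A * B * (‖x‖ ^ 2) ^ 2
          + (3 * N + 6) * B ^ 2 * (‖x‖ ^ 2) := by
        rw [key_sum N (fun i => x i) A B, hS]
    _ = rho'' ‖x‖ ^ 2 + 3 * ((N : ℝ) - 1) * (rho ‖x‖ - ‖x‖ * rho' ‖x‖) ^ 2 / ‖x‖ ^ 4 := by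
        rw [hA, hB]
        field_simp
        ring
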